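/- For every real parameter z: (a) the skew-symmetric bivector π_II on ℝ⁴ with components π_II^{01} = 0, π_II^{02} = z s¹s³, π_II^{03} = −z s¹s², π_II^{12} = z s⁰s³, π_II^{13} = −z s⁰s², π_II^{23} = 0 satisfies the Jacobi identity Σ_σ (π^{μσ}∂_σ π^{νρ} + π^{νσ}∂_σ π^{ρμ} + π^{ρσ}∂_σ π^{μν}) = 0 for all μ,ν,ρ ∈ {0,1,2,3}; and (b) the skew-symmetric bivector π_III on ℝ⁴ with components π_III^{01} = z(s⁰+s¹)s², π_III^{02} = −z(s⁰+s¹)s¹, π_III^{12} = −z(s⁰+s¹)s⁰, and π_III^{03} = π_III^{13} = π_III^{23} = 0 also satisfies this Jacobi identity. Hence each defines a Poisson bracket on ℝ⁴ (the Type II and Type III (A)dS/Minkowski Poisson homogeneous spacetimes in ambient coordinates). -/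

import Mathlib

namespace NCSTPoisson

noncomputable section

/-- The ambient spacetime coordinates `(s⁰,s¹,s²,s³)`. -/
abbrev S : Type := Fin 4 → ℝ

/-- The partial derivative `∂f/∂s^σ` at `s`. -/
def pd (σ : Fin 4) (f : S → ℝ) (s : S) : ℝ := fderiv ℝ f s (Pi.single σ 1)

/-- The Type I Poisson bivector on `ℝ⁴` in ambient coordinates:
`π^{01} = z(s⁰+s¹)s²`, `π^{02} = −z[(s⁰+s¹)s¹ + (s³)²] − z'(s⁰+s¹)s³`,
`π^{03} = z s²s³ + z'(s⁰+s¹)s²`, `π^{12} = −z[(s⁰+s¹)s⁰ − (s³)²] + z'(s⁰+s¹)s³`,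
`π^{13} = −z s²s³ − z'(s⁰+s¹)s²`, `π^{23} = z(s⁰+s¹)s³ + z'(s⁰+s¹)²`,
`π^{νμ} = −π^{μν}`. -/
def piI (z z' : ℝ) (s : S) : Fin 4 → Fin 4 → ℝ :=
  ![![0, z * (s 0 + s 1) * s 2,
      -(z * ((s 0 + s 1) * s 1 + (s 3) ^ 2)) - z' * (s 0 + s 1) * s 3,
      z * s 2 * s 3 + z' * (s 0 + s 1) * s 2],
    ![-(z * (s 0 + s 1) * s 2), 0,
      -(z * ((s 0 + s 1) * s 0 - (s 3) ^ 2)) + z' * (s 0 + s 1) * s 3,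
      -(z * s 2 * s 3) - z' * (s 0 + s 1) * s 2],
    ![-(-(z * ((s 0 + s 1) * s 1 + (s 3) ^ 2)) - z' * (s 0 + s 1) * s 3),
      -(-(z * ((s 0 + s 1) * s 0 - (s 3) ^ 2)) + z' * (s 0 + s 1) * s 3), 0,
      z * (s 0 + s 1) * s 3 + z' * (s 0 + s 1) ^ 2],
    ![-(z * s 2 * s 3 + z' * (s 0 + s 1) * s 2),
      -(-(z * s 2 * s 3) - z' * (s 0 + s 1) * s 2),
      -(z * (s 0 + s 1) * s 3 + z' * (s 0 + s 1) ^ 2), 0]]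

/-- The Type II Poisson bivector on `ℝ⁴`:
`π^{02} = z s¹s³`, `π^{03} = −z s¹s²`, `π^{12} = z s⁰s³`, `π^{13} = −z s⁰s²`,
`π^{01} = π^{23} = 0`, `π^{νμ} = −π^{μν}`. -/
def piII (z : ℝ) (s : S) : Fin 4 → Fin 4 → ℝ :=
  ![![0, 0, z * s 1 * s 3, -(z * s 1 * s 2)],
    ![0, 0, z * s 0 * s 3, -(z * s 0 * s 2)],
    ![-(z * s 1 * s 3), -(z * s 0 * s 3), 0, 0],
    ![z * s 1 * s 2, z * s 0 * s 2, 0, 0]]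

/-- The Type III Poisson bivector on `ℝ⁴`:
`π^{01} = z(s⁰+s¹)s²`, `π^{02} = −z(s⁰+s¹)s¹`, `π^{12} = −z(s⁰+s¹)s⁰`,
`π^{03} = π^{13} = π^{23} = 0`, `π^{νμ} = −π^{μν}`. -/
def piIII (z : ℝ) (s : S) : Fin 4 → Fin 4 → ℝ :=
  ![![0, z * (s 0 + s 1) * s 2, -(z * (s 0 + s 1) * s 1), 0],
    ![-(z * (s 0 + s 1) * s 2), 0, -(z * (s 0 + s 1) * s 0), 0],
    ![z * (s 0 + s 1) * s 1, z * (s 0 + s 1) * s 0, 0, 0],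
    ![0, 0, 0, 0]]

/-- The Jacobiator `Σ_σ (π^{μσ}∂_σ π^{νρ} + π^{νσ}∂_σ π^{ρμ} + π^{ρσ}∂_σ π^{μν})`
of a bivector field `π` on `ℝ⁴`. -/
def jacobiator (π : S → Fin 4 → Fin 4 → ℝ) (μ ν ρ : Fin 4) (s : S) : ℝ :=
  ∑ σ : Fin 4,
    (π s μ σ * pd σ (fun t => π t ν ρ) s
     + π s ν σ * pd σ (fun t => π t ρ μ) s
     + π s ρ σ * pd σ (fun t => π t μ ν) s)


lemma hcoord (i : Fin 4) (s : S) : HasFDerivAt (fun t : S => t i)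
    (ContinuousLinearMap.proj i : S →L[ℝ] ℝ) s :=
  (ContinuousLinearMap.proj i : S →L[ℝ] ℝ).hasFDerivAt

lemma pd_zero (σ : Fin 4) (s : S) : pd σ (fun _ => (0:ℝ)) s = 0 := by simp [pd]

lemma pd_neg (σ : Fin 4) (f : S → ℝ) (s : S) :
    pd σ (fun t => -(f t)) s = -(pd σ f s) := by
  simp [pd, fderiv_neg]

lemma pd_cmm (σ : Fin 4) (c : ℝ) (i j : Fin 4) (s : S) :
    pd σ (fun t => c * t i * t j) s
      = c * ((Pi.single σ 1 : S) i * s j + s i * (Pi.single σ 1 : S) j) := by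
  have h := (((hcoord i s).const_mul c).fun_mul (hcoord j s)).fderiv
  simp only [pd, h]
  simp [ContinuousLinearMap.proj_apply]; ring

lemma pd_camm (σ : Fin 4) (c : ℝ) (i j k : Fin 4) (s : S) :
    pd σ (fun t => c * (t i + t j) * t k) s
      = c * (((Pi.single σ 1 : S) i + (Pi.single σ 1 : S) j) * s k
          + (s i + s j) * (Pi.single σ 1 : S) k) := by
  have h := ((((hcoord i s).fun_add (hcoord j s)).const_mul c).fun_mul (hcoord k s)).fderiv
  simp only [pd, h]
  simp [ContinuousLinearMap.proj_apply]; ring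

set_option maxHeartbeats 1000000 in
/-- The Type II and Type III bivectors `π_II`, `π_III` are
skew-symmetric and satisfy the Jacobi identity, hence each defines a Poisson bracket
on `ℝ⁴`. -/
theorem piII_piIII_skew_and_jacobi (z : ℝ) :
    (∀ (s : S) (μ ν : Fin 4), piII z s ν μ = -piII z s μ ν) ∧
    (∀ (μ ν ρ : Fin 4) (s : S), jacobiator (piII z) μ ν ρ s = 0) ∧
    (∀ (s : S) (μ ν : Fin 4), piIII z s ν μ = -piIII z s μ ν) ∧
    (∀ (μ ν ρ : Fin 4) (s : S), jacobiator (piIII z) μ ν ρ s = 0) := by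
  refine ⟨?_, ?_, ?_, ?_⟩
  · intro s μ ν
    fin_cases μ <;> fin_cases ν <;> simp [piII, Matrix.vecHead, Matrix.vecTail]
  · intro μ ν ρ s
    fin_cases μ <;> fin_cases ν <;> fin_cases ρ <;>
      (simp only [jacobiator, piII, Fin.sum_univ_four, Fin.isValue, Fin.zero_eta,
        Fin.mk_one, Fin.reduceFinMk,
        Matrix.cons_val_zero, Matrix.cons_val_one, Matrix.head_cons,
        Matrix.head_fin_const, Matrix.cons_val_two, Matrix.tail_cons,
        Matrix.cons_val_three, pd_zero, pd_neg, pd_cmm, pd_camm];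
       (try simp only [Pi.single_apply, Fin.reduceEq, if_false, if_true, reduceIte]);
       ring)
  · intro s μ ν
    fin_cases μ <;> fin_cases ν <;> simp [piIII, Matrix.vecHead, Matrix.vecTail]
  · intro μ ν ρ s
    fin_cases μ <;> fin_cases ν <;> fin_cases ρ <;>
      (simp only [jacobiator, piIII, Fin.sum_univ_four, Fin.isValue, Fin.zero_eta,
        Fin.mk_one, Fin.reduceFinMk,
        Matrix.cons_val_zero, Matrix.cons_val_one, Matrix.head_cons,
        Matrix.head_fin_const, Matrix.cons_val_two, Matrix.tail_cons,
        Matrix.cons_val_three, pd_zero, pd_neg, pd_cmm, pd_camm];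
       (try simp only [Pi.single_apply, Fin.reduceEq, if_false, if_true, reduceIte]);
       ring)

end
end NCSTPoisson
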